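/- arXiv:1605.03244 — 6 statements merged into one kernel-verified Lean document; each statement's English description precedes it below -/
import Mathlib

section
/- For all real numbers κ ≥ 0, μ > 0, w̄ > 0 and s ≥ 0, the series ∑_{n=0}^∞ e^{-μκ} (μκ)^n / n! · (1 + s·w̄/(μ(1+κ)))^{-(n+μ)} converges and equals (1 + s·w̄/(μ(1+κ)))^{-μ} · exp( - μκ·s·w̄ / (s·w̄ + μ(1+κ)) ). -/
/-- Closed-form simplification of the Laplace transform of the κ-μ fading power
distribution (Lemma 2 of the paper, κ-μ case). -/
theorem kappa_mu_laplace_series (κ μ w s : ℝ) (hκ : 0 ≤ κ) (hμ : 0 < μ)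
    (hw : 0 < w) (hs : 0 ≤ s) :
    HasSum
      (fun n : ℕ => Real.exp (-(μ * κ)) * (μ * κ) ^ n / n.factorial *
        (1 + s * w / (μ * (1 + κ))) ^ (-((n : ℝ) + μ)))
      ((1 + s * w / (μ * (1 + κ))) ^ (-μ) *
        Real.exp (-(μ * κ * (s * w)) / (s * w + μ * (1 + κ)))) := by
  have hκ1 : (0:ℝ) < 1 + κ := by linarith
  have hd : (0:ℝ) < μ * (1 + κ) := by positivity
  have hsw : 0 ≤ s * w := by positivity
  set b : ℝ := 1 + s * w / (μ * (1 + κ)) with hb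
  have hb0 : 0 < b := by
    rw [hb]; positivity
  have hE : HasSum (fun n : ℕ => (μ * κ / b) ^ n / n.factorial)
      (Real.exp (μ * κ / b)) := by
    have := NormedSpace.expSeries_div_hasSum_exp (μ * κ / b)
    rwa [← Real.exp_eq_exp_ℝ] at this
  have key := hE.mul_left (Real.exp (-(μ * κ)) * b ^ (-μ))
  convert key using 1
  · rfl
  · funext n
    have h1 : b ^ (-((n : ℝ) + μ)) = (b ^ n)⁻¹ * b ^ (-μ) := by
      rw [neg_add, Real.rpow_add hb0, Real.rpow_neg hb0.le,
        Real.rpow_natCast]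
    rw [h1, div_pow]
    have hbn : (b : ℝ) ^ n ≠ 0 := pow_ne_zero _ hb0.ne'
    field_simp
  · rw [show Real.exp (-(μ * κ)) * b ^ (-μ) * Real.exp (μ * κ / b)
        = b ^ (-μ) * Real.exp (-(μ * κ) + μ * κ / b) by rw [Real.exp_add]; ring]
    congr 1
    have hden : (0:ℝ) < s * w + μ * (1 + κ) := by positivity
    rw [hb]
    field_simp
    ring
end

section
/- Let m ≥ 1 be a natural number, b > 0, and let g : ℝ → ℝ be m-times continuously differentiable on [0, ∞) such that for every 0 ≤ i ≤ m, the i-th derivative of z ↦ z^{m−1} g(z) is polynomially bounded on [0, ∞). Define g_m(z) = (1/(m−1)!) · dᵐ/dzᵐ ( z^{m−1} g(z) ). Then ∫_0^∞ (b^m z^{m−1}/(m−1)!) · g(z) · e^{−bz} dz = g(0) + ∫_0^∞ g_m(z) · e^{−bz} dz. -/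
open MeasureTheory

section Aux
open Set Filter

lemma poly_exp_tendsto (C c : ℝ) (hc : 0 < c) (k : ℕ) :
    Tendsto (fun z : ℝ => C * (1 + z) ^ k * Real.exp (-c * z)) atTop (nhds 0) := by
  have h1 : Tendsto (fun x : ℝ => x ^ (k : ℝ) * Real.exp (-c * x)) atTop (nhds 0) :=
    tendsto_rpow_mul_exp_neg_mul_atTop_nhds_zero k c hc
  have h2 : Tendsto (fun z : ℝ => (1 + z) ^ (k : ℝ) * Real.exp (-c * (1 + z))) atTop (nhds 0) :=
    h1.comp (tendsto_atTop_add_const_left _ 1 tendsto_id)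
  have h3 := h2.const_mul (C * Real.exp c)
  rw [mul_zero] at h3
  refine h3.congr' ?_
  filter_upwards [eventually_ge_atTop (0 : ℝ)] with z hz
  rw [Real.rpow_natCast]
  have he : Real.exp c * Real.exp (-c * (1 + z)) = Real.exp (-c * z) := by
    rw [← Real.exp_add]; ring_nf
  calc C * Real.exp c * ((1 + z) ^ k * Real.exp (-c * (1 + z)))
      = C * (1 + z) ^ k * (Real.exp c * Real.exp (-c * (1 + z))) := by ring
    _ = C * (1 + z) ^ k * Real.exp (-c * z) := by rw [he]

lemma integrable_poly_bound {q : ℝ → ℝ} {b C : ℝ} {k : ℕ} (hb : 0 < b)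
    (hq : ContinuousOn q (Set.Ici 0))
    (hbd : ∀ z ≥ (0 : ℝ), |q z| ≤ C * (1 + z) ^ k) :
    IntegrableOn (fun z => q z * Real.exp (-b * z)) (Set.Ioi 0) := by
  apply integrable_of_isBigO_exp_neg (half_pos hb)
  · exact hq.mul ((Real.continuous_exp.comp (continuous_const.mul continuous_id)).continuousOn)
  · rw [Asymptotics.isBigO_iff]
    refine ⟨1, ?_⟩
    have ht := poly_exp_tendsto C (b / 2) (half_pos hb) k
    have hev : ∀ᶠ z : ℝ in atTop, C * (1 + z) ^ k * Real.exp (-(b / 2) * z) < 1 :=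
      ht.eventually_lt_const (by norm_num)
    filter_upwards [hev, eventually_ge_atTop (0 : ℝ)] with z h1 hz
    have hqz := hbd z hz
    have hsplit : Real.exp (-b * z) = Real.exp (-(b / 2) * z) * Real.exp (-(b / 2) * z) := by
      rw [← Real.exp_add]; ring_nf
    have e1 : (0:ℝ) < Real.exp (-(b / 2) * z) := Real.exp_pos _
    rw [Real.norm_eq_abs, Real.norm_eq_abs, abs_mul, Real.abs_exp, hsplit,
      Real.abs_exp, one_mul]
    calc |q z| * (Real.exp (-(b / 2) * z) * Real.exp (-(b / 2) * z))
        ≤ (C * (1 + z) ^ k) * (Real.exp (-(b / 2) * z) * Real.exp (-(b / 2) * z)) := by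
          apply mul_le_mul_of_nonneg_right hqz; positivity
      _ = (C * (1 + z) ^ k * Real.exp (-(b / 2) * z)) * Real.exp (-(b / 2) * z) := by ring
      _ ≤ 1 * Real.exp (-(b / 2) * z) := by
          apply mul_le_mul_of_nonneg_right h1.le e1.le
      _ = Real.exp (-(b / 2) * z) := one_mul _

lemma tendsto_mul_exp_zero {h : ℝ → ℝ} {b C : ℝ} {k : ℕ} (hb : 0 < b)
    (hbd : ∀ z ≥ (0 : ℝ), |h z| ≤ C * (1 + z) ^ k) :
    Tendsto (fun z => h z * Real.exp (-b * z)) atTop (nhds 0) := by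
  apply squeeze_zero_norm' (a := fun z => C * (1 + z) ^ k * Real.exp (-b * z))
    (t₀ := atTop) ?_ (poly_exp_tendsto C b hb k)
  filter_upwards [eventually_ge_atTop (0 : ℝ)] with z hz
  rw [Real.norm_eq_abs, abs_mul, Real.abs_exp]
  exact mul_le_mul_of_nonneg_right (hbd z hz) (Real.exp_pos _).le

lemma one_step {b : ℝ} (hb : 0 < b) {h h' : ℝ → ℝ}
    (hcont : ContinuousOn h (Set.Ici 0)) (hcont' : ContinuousOn h' (Set.Ici 0))
    (hderiv : ∀ z ∈ Set.Ioi (0 : ℝ), HasDerivAt h (h' z) z)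
    (hC : ∃ C : ℝ, ∃ k : ℕ, ∀ z ≥ (0 : ℝ), |h z| ≤ C * (1 + z) ^ k)
    (hC' : ∃ C : ℝ, ∃ k : ℕ, ∀ z ≥ (0 : ℝ), |h' z| ≤ C * (1 + z) ^ k) :
    b * ∫ z in Set.Ioi (0 : ℝ), h z * Real.exp (-b * z)
      = h 0 + ∫ z in Set.Ioi (0 : ℝ), h' z * Real.exp (-b * z) := by
  obtain ⟨C, k, hCk⟩ := hC
  obtain ⟨C', k', hCk'⟩ := hC'
  have Ih : IntegrableOn (fun z => h z * Real.exp (-b * z)) (Set.Ioi 0) :=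
    integrable_poly_bound hb hcont hCk
  have Ih' : IntegrableOn (fun z => h' z * Real.exp (-b * z)) (Set.Ioi 0) :=
    integrable_poly_bound hb hcont' hCk'
  have key : ∫ z in Set.Ioi (0 : ℝ),
      (h' z * Real.exp (-b * z) - b * (h z * Real.exp (-b * z)))
      = 0 - h 0 * Real.exp (-b * 0) := by
    apply integral_Ioi_of_hasDerivAt_of_tendsto
      (f := fun z => h z * Real.exp (-b * z))
    · exact ((hcont 0 Set.self_mem_Ici).mul
        ((Real.continuous_exp.comp (continuous_const.mul continuous_id)).continuousWithinAt))
    · intro x hx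
      have hexp : HasDerivAt (fun z : ℝ => Real.exp (-b * z)) (Real.exp (-b * x) * (-b)) x := by
        have := ((hasDerivAt_id x).const_mul (-b)).exp
        simpa [mul_comm] using this
      have := (hderiv x hx).fun_mul hexp
      convert this using 1
      · rfl
      · ring
    · exact Ih'.sub (Ih.const_mul b)
    · exact tendsto_mul_exp_zero hb hCk
  rw [integral_sub Ih' (Ih.const_mul b), integral_const_mul] at key
  rw [show -b * (0:ℝ) = 0 by ring, Real.exp_zero, mul_one] at key
  linarith

lemma leibniz_pow_mul {m : ℕ} {g : ℝ → ℝ} (hg : ContDiffOn ℝ m g (Set.Ici 0)) (p : ℕ) :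
    ∀ i, i ≤ m → ∀ z ∈ Set.Ici (0 : ℝ),
      iteratedDerivWithin i (fun z : ℝ => z ^ p * g z) (Set.Ici 0) z =
        ∑ j ∈ Finset.range (i + 1), (i.choose j : ℝ) * (p.descFactorial j : ℝ) * z ^ (p - j) *
          iteratedDerivWithin (i - j) g (Set.Ici 0) z := by
  intro i
  induction i with
  | zero =>
    intro _ z hz
    simp [iteratedDerivWithin_zero]
  | succ i IH =>
    intro hi z hz
    have hu : UniqueDiffOn ℝ (Set.Ici (0 : ℝ)) := uniqueDiffOn_Ici 0
    have hiz : UniqueDiffWithinAt ℝ (Set.Ici (0 : ℝ)) z := hu z hz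
    rw [iteratedDerivWithin_succ]
    have hEq : Set.EqOn (iteratedDerivWithin i (fun z : ℝ => z ^ p * g z) (Set.Ici 0))
        (fun z => ∑ j ∈ Finset.range (i + 1), (i.choose j : ℝ) * (p.descFactorial j : ℝ) *
          z ^ (p - j) * iteratedDerivWithin (i - j) g (Set.Ici 0) z) (Set.Ici 0) :=
      fun w hw => IH (le_trans (Nat.le_succ i) hi) w hw
    rw [derivWithin_congr hEq (hEq hz)]
    have hder : HasDerivWithinAt
        (fun z => ∑ j ∈ Finset.range (i + 1), (i.choose j : ℝ) * (p.descFactorial j : ℝ) *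
          z ^ (p - j) * iteratedDerivWithin (i - j) g (Set.Ici 0) z)
        (∑ j ∈ Finset.range (i + 1),
          (((i.choose j : ℝ) * (p.descFactorial j : ℝ) * (((p - j : ℕ) : ℝ) * z ^ (p - j - 1))) *
              iteratedDerivWithin (i - j) g (Set.Ici 0) z +
            ((i.choose j : ℝ) * (p.descFactorial j : ℝ) * z ^ (p - j)) *
              iteratedDerivWithin (i - j + 1) g (Set.Ici 0) z))
        (Set.Ici 0) z := by
      apply HasDerivWithinAt.fun_sum
      intro j hj
      have hlt : ((i - j : ℕ) : WithTop ℕ∞) < (m : WithTop ℕ∞) := by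
        exact_mod_cast lt_of_lt_of_le (Nat.lt_succ_of_le (Nat.sub_le i j)) hi
      have hdiff : HasDerivWithinAt (iteratedDerivWithin (i - j) g (Set.Ici 0))
          (iteratedDerivWithin (i - j + 1) g (Set.Ici 0) z) (Set.Ici 0) z := by
        have hd := (hg.differentiableOn_iteratedDerivWithin hlt hu) z hz
        have h2 := hd.hasDerivWithinAt
        rwa [← iteratedDerivWithin_succ] at h2
      have hpow : HasDerivWithinAt
          (fun w : ℝ => (i.choose j : ℝ) * (p.descFactorial j : ℝ) * w ^ (p - j))
          ((i.choose j : ℝ) * (p.descFactorial j : ℝ) * (((p - j : ℕ) : ℝ) * z ^ (p - j - 1)))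
          (Set.Ici 0) z :=
        ((hasDerivAt_pow (p - j) z).hasDerivWithinAt).const_mul _
      exact hpow.mul hdiff
    rw [hder.derivWithin hiz]
    -- combinatorial identity
    set T : ℕ → ℝ := fun j => (p.descFactorial j : ℝ) * z ^ (p - j) *
      iteratedDerivWithin (i + 1 - j) g (Set.Ici 0) z with hT
    have lhs_eq : ∑ j ∈ Finset.range (i + 1),
        (((i.choose j : ℝ) * (p.descFactorial j : ℝ) * (((p - j : ℕ) : ℝ) * z ^ (p - j - 1))) *
            iteratedDerivWithin (i - j) g (Set.Ici 0) z +
          ((i.choose j : ℝ) * (p.descFactorial j : ℝ) * z ^ (p - j)) *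
            iteratedDerivWithin (i - j + 1) g (Set.Ici 0) z)
        = ∑ j ∈ Finset.range (i + 1),
          ((i.choose j : ℝ) * T (j + 1) + (i.choose j : ℝ) * T j) := by
      apply Finset.sum_congr rfl
      intro j hj
      have hj' : j ≤ i := Nat.lt_succ_iff.mp (Finset.mem_range.mp hj)
      have h1 : i + 1 - (j + 1) = i - j := Nat.succ_sub_succ i j
      have h2 : i + 1 - j = i - j + 1 := by omega
      have h3 : p - (j + 1) = p - j - 1 := by omega
      have h4 : (p.descFactorial (j + 1) : ℝ) = ((p - j : ℕ) : ℝ) * (p.descFactorial j : ℝ) := by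
        rw [Nat.descFactorial_succ]; push_cast; ring
      rw [hT]
      simp only [h1, h2, h3, h4]
      ring
    rw [lhs_eq]
    have e1 : ∀ j ∈ Finset.range (i + 1),
        (((i + 1).choose (j + 1) : ℝ)) * (p.descFactorial (j+1) : ℝ) * z ^ (p - (j+1)) *
          iteratedDerivWithin (i + 1 - (j+1)) g (Set.Ici 0) z
          = (i.choose j : ℝ) * T (j + 1) + (i.choose (j + 1) : ℝ) * T (j + 1) := by
      intro j _
      rw [hT, Nat.choose_succ_succ]
      push_cast
      ring
    calc ∑ j ∈ Finset.range (i + 1),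
          ((i.choose j : ℝ) * T (j + 1) + (i.choose j : ℝ) * T j)
        = ∑ j ∈ Finset.range (i + 1), (i.choose j : ℝ) * T (j + 1)
            + ∑ j ∈ Finset.range (i + 1), (i.choose j : ℝ) * T j := Finset.sum_add_distrib
      _ = ∑ j ∈ Finset.range (i + 1), (i.choose j : ℝ) * T (j + 1)
            + (∑ j ∈ Finset.range (i + 1), (i.choose j : ℝ) * T j
                + (i.choose (i + 1) : ℝ) * T (i + 1)) := by
          rw [Nat.choose_succ_self]; push_cast; ring
      _ = ∑ j ∈ Finset.range (i + 1), (i.choose j : ℝ) * T (j + 1)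
            + ∑ j ∈ Finset.range (i + 2), (i.choose j : ℝ) * T j := by
          rw [Finset.sum_range_succ (fun j => (i.choose j : ℝ) * T j) (i + 1)]
      _ = ∑ j ∈ Finset.range (i + 1), (i.choose j : ℝ) * T (j + 1)
            + (∑ j ∈ Finset.range (i + 1), (i.choose (j + 1) : ℝ) * T (j + 1)
                + (i.choose 0 : ℝ) * T 0) := by
          rw [Finset.sum_range_succ' (fun j => (i.choose j : ℝ) * T j)]
      _ = ∑ j ∈ Finset.range (i + 1),
            ((i.choose j : ℝ) * T (j + 1) + (i.choose (j + 1) : ℝ) * T (j + 1))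
            + ((i + 1).choose 0 : ℝ) * T 0 := by
          rw [Finset.sum_add_distrib]; simp; ring
      _ = ∑ j ∈ Finset.range (i + 1),
            (((i + 1).choose (j + 1) : ℝ)) * (p.descFactorial (j+1) : ℝ) * z ^ (p - (j+1)) *
              iteratedDerivWithin (i + 1 - (j+1)) g (Set.Ici 0) z
            + ((i + 1).choose 0 : ℝ) * (p.descFactorial 0 : ℝ) * z ^ (p - 0) *
              iteratedDerivWithin (i + 1 - 0) g (Set.Ici 0) z := by
          rw [Finset.sum_congr rfl e1]
          simp [hT]
      _ = ∑ j ∈ Finset.range (i + 2), ((i + 1).choose j : ℝ) * (p.descFactorial j : ℝ) *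
            z ^ (p - j) * iteratedDerivWithin (i + 1 - j) g (Set.Ici 0) z := by
          rw [Finset.sum_range_succ' (fun j => ((i + 1).choose j : ℝ) * (p.descFactorial j : ℝ) *
            z ^ (p - j) * iteratedDerivWithin (i + 1 - j) g (Set.Ici 0) z)]

lemma boundary_lt {m : ℕ} {g : ℝ → ℝ} (hg : ContDiffOn ℝ m g (Set.Ici 0)) {i : ℕ}
    (hi : i < m - 1) :
    iteratedDerivWithin i (fun z : ℝ => z ^ (m - 1) * g z) (Set.Ici 0) 0 = 0 := by
  rw [leibniz_pow_mul hg (m - 1) i (by omega) 0 Set.self_mem_Ici]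
  apply Finset.sum_eq_zero
  intro j hj
  have hj' : j < m - 1 := lt_of_le_of_lt (Nat.lt_succ_iff.mp (Finset.mem_range.mp hj)) hi
  rw [zero_pow (by omega : m - 1 - j ≠ 0)]
  ring

lemma boundary_eq {m : ℕ} {g : ℝ → ℝ} (hg : ContDiffOn ℝ m g (Set.Ici 0)) (hm : 1 ≤ m) :
    iteratedDerivWithin (m - 1) (fun z : ℝ => z ^ (m - 1) * g z) (Set.Ici 0) 0
      = ((m - 1).factorial : ℝ) * g 0 := by
  rw [leibniz_pow_mul hg (m - 1) (m - 1) (by omega) 0 Set.self_mem_Ici]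
  rw [Finset.sum_eq_single_of_mem (m - 1) (Finset.self_mem_range_succ (m - 1))]
  · simp [Nat.choose_self, Nat.descFactorial_self, Nat.sub_self, iteratedDerivWithin_zero]
  · intro j hj hne
    have hj' : j < m - 1 :=
      lt_of_le_of_ne (Nat.lt_succ_iff.mp (Finset.mem_range.mp hj)) hne
    rw [zero_pow (by omega : m - 1 - j ≠ 0)]
    ring

end Aux

section Main
open Set Filter

/-- Integration-by-parts identity for the Gamma density of integer shape m and
rate b, the core computational step in Theorems 1 and 2 (Hamdi's lemma). -/
theorem gamma_density_integration_by_parts (m : ℕ) (hm : 1 ≤ m) (b : ℝ) (hb : 0 < b)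
    (g : ℝ → ℝ) (hg : ContDiffOn ℝ m g (Set.Ici 0))
    (hbound : ∀ i ≤ m, ∃ C : ℝ, ∃ k : ℕ, ∀ z ≥ (0 : ℝ),
      |iteratedDerivWithin i (fun z : ℝ => z ^ (m - 1) * g z) (Set.Ici 0) z| ≤
        C * (1 + z) ^ k) :
    ∫ z in Set.Ioi (0 : ℝ),
        b ^ m * z ^ (m - 1) / (m - 1).factorial * g z * Real.exp (-b * z) =
      g 0 + ∫ z in Set.Ioi (0 : ℝ),
        (1 / (m - 1).factorial : ℝ) *
          iteratedDerivWithin m (fun z : ℝ => z ^ (m - 1) * g z) (Set.Ici 0) z *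
          Real.exp (-b * z) := by
  have hu : UniqueDiffOn ℝ (Set.Ici (0 : ℝ)) := uniqueDiffOn_Ici 0
  set f : ℝ → ℝ := fun z : ℝ => z ^ (m - 1) * g z with hf_def
  set F : ℕ → ℝ → ℝ := fun i => iteratedDerivWithin i f (Set.Ici 0) with hF_def
  have hf : ContDiffOn ℝ m f (Set.Ici 0) := by
    exact ((contDiff_id.pow (m - 1)).contDiffOn).mul hg
  have hcontF : ∀ i, i ≤ m → ContinuousOn (F i) (Set.Ici 0) := by
    intro i hi
    exact hf.continuousOn_iteratedDerivWithin (by exact_mod_cast hi) hu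
  have hderivF : ∀ i, i < m → ∀ z ∈ Set.Ioi (0 : ℝ), HasDerivAt (F i) (F (i + 1) z) z := by
    intro i hi z hz
    have hz' : z ∈ Set.Ici (0 : ℝ) := Set.mem_Ici.mpr (le_of_lt hz)
    have hd := (hf.differentiableOn_iteratedDerivWithin (by exact_mod_cast hi) hu) z hz'
    have h2 : HasDerivWithinAt (F i) (F (i + 1) z) (Set.Ici 0) z := by
      have h3 := hd.hasDerivWithinAt
      rwa [← iteratedDerivWithin_succ] at h3
    exact h2.hasDerivAt (Ici_mem_nhds hz)
  have step : ∀ i, i < m →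
      b * ∫ z in Set.Ioi (0 : ℝ), F i z * Real.exp (-b * z)
        = F i 0 + ∫ z in Set.Ioi (0 : ℝ), F (i + 1) z * Real.exp (-b * z) := by
    intro i hi
    exact one_step hb (hcontF i hi.le) (hcontF (i + 1) hi) (hderivF i hi)
      (hbound i hi.le) (hbound (i + 1) hi)
  have claim : ∀ d, d ≤ m →
      b ^ d * ∫ z in Set.Ioi (0 : ℝ), F (m - d) z * Real.exp (-b * z)
        = (if 1 ≤ d then ((m - 1).factorial : ℝ) * g 0 else 0)
          + ∫ z in Set.Ioi (0 : ℝ), F m z * Real.exp (-b * z) := by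
    intro d
    induction d with
    | zero => intro _; simp
    | succ d ih =>
      intro hd1
      have hlt : m - (d + 1) < m := by omega
      have hstep := step (m - (d + 1)) hlt
      have h1 : m - (d + 1) + 1 = m - d := by omega
      rw [h1] at hstep
      have IH := ih (by omega)
      have hbv : b ^ d * F (m - (d + 1)) 0
          = (if 1 ≤ d + 1 then ((m - 1).factorial : ℝ) * g 0 else 0)
            - (if 1 ≤ d then ((m - 1).factorial : ℝ) * g 0 else 0) := by
        simp only [hF_def, hf_def]
        by_cases hd0 : d = 0
        · subst hd0
          simp only [if_pos (le_refl 1), pow_zero, one_mul]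
          rw [show m - (0 + 1) = m - 1 by omega, boundary_eq hg hm]
          simp
        · have : m - (d + 1) < m - 1 := by omega
          rw [boundary_lt hg this]
          simp [Nat.one_le_iff_ne_zero.mpr hd0]
      calc b ^ (d + 1) * ∫ z in Set.Ioi (0 : ℝ), F (m - (d + 1)) z * Real.exp (-b * z)
          = b ^ d * (b * ∫ z in Set.Ioi (0 : ℝ), F (m - (d + 1)) z * Real.exp (-b * z)) := by
            ring
        _ = b ^ d * (F (m - (d + 1)) 0
              + ∫ z in Set.Ioi (0 : ℝ), F (m - d) z * Real.exp (-b * z)) := by rw [hstep]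
        _ = b ^ d * F (m - (d + 1)) 0
              + b ^ d * ∫ z in Set.Ioi (0 : ℝ), F (m - d) z * Real.exp (-b * z) := by ring
        _ = b ^ d * F (m - (d + 1)) 0
              + ((if 1 ≤ d then ((m - 1).factorial : ℝ) * g 0 else 0)
                + ∫ z in Set.Ioi (0 : ℝ), F m z * Real.exp (-b * z)) := by rw [IH]
        _ = (if 1 ≤ d + 1 then ((m - 1).factorial : ℝ) * g 0 else 0)
              + ∫ z in Set.Ioi (0 : ℝ), F m z * Real.exp (-b * z) := by rw [hbv]; ring
  have main := claim m le_rfl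
  rw [Nat.sub_self, if_pos hm] at main
  have hF0 : F 0 = f := iteratedDerivWithin_zero
  rw [hF0] at main
  have hc : (((m - 1).factorial : ℕ) : ℝ) ≠ 0 := Nat.cast_ne_zero.mpr (Nat.factorial_ne_zero _)
  have lhs_eq : (fun z : ℝ => b ^ m * z ^ (m - 1) / ((m - 1).factorial : ℝ) * g z *
      Real.exp (-b * z))
      = fun z : ℝ => (b ^ m * (((m - 1).factorial : ℝ))⁻¹) * (f z * Real.exp (-b * z)) := by
    funext z
    rw [hf_def]
    ring
  have rhs_eq : (fun z : ℝ => (1 / ((m - 1).factorial : ℝ)) * F m z * Real.exp (-b * z))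
      = fun z : ℝ => (((m - 1).factorial : ℝ))⁻¹ * (F m z * Real.exp (-b * z)) := by
    funext z
    ring
  rw [hF_def, hf_def] at main
  show (∫ z in Set.Ioi (0 : ℝ), b ^ m * z ^ (m - 1) / ((m - 1).factorial : ℝ) * g z *
      Real.exp (-b * z))
    = g 0 + ∫ z in Set.Ioi (0 : ℝ), (1 / ((m - 1).factorial : ℝ)) *
        iteratedDerivWithin m (fun z : ℝ => z ^ (m - 1) * g z) (Set.Ici 0) z *
        Real.exp (-b * z)
  rw [lhs_eq, rhs_eq, integral_const_mul, integral_const_mul]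
  calc b ^ m * (((m - 1).factorial : ℝ))⁻¹ *
        ∫ z in Set.Ioi (0 : ℝ), (fun z : ℝ => z ^ (m - 1) * g z) z * Real.exp (-b * z)
      = (((m - 1).factorial : ℝ))⁻¹ * (b ^ m *
        ∫ z in Set.Ioi (0 : ℝ), (fun z : ℝ => z ^ (m - 1) * g z) z * Real.exp (-b * z)) := by
        ring
    _ = (((m - 1).factorial : ℝ))⁻¹ * (((m - 1).factorial : ℝ) * g 0
        + ∫ z in Set.Ioi (0 : ℝ),
            iteratedDerivWithin m (fun z : ℝ => z ^ (m - 1) * g z) (Set.Ici 0) z *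
            Real.exp (-b * z)) := by rw [main]
    _ = g 0 + (((m - 1).factorial : ℝ))⁻¹ *
          ∫ z in Set.Ioi (0 : ℝ),
            iteratedDerivWithin m (fun z : ℝ => z ^ (m - 1) * g z) (Set.Ici 0) z *
            Real.exp (-b * z) := by
        field_simp

end Main
end

section
/- Let η > 0 and μ > 0 be real, and set h = (2 + η⁻¹ + η)/4 and H = (η⁻¹ − η)/4. Then the series ∑_{n=0}^∞ (Γ(μ+n)/(n!·Γ(μ))) · H^{2n}/h^{μ+2n} converges and equals 1. -/
open MeasureTheory Set

/-- The generalized binomial series: for `0 ≤ t < 1` and `μ > 0`,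
`∑ Γ(μ+n)/(n!·Γ(μ)) tⁿ = (1-t)^(-μ)`. -/
lemma binom_series_aux (μ t : ℝ) (hμ : 0 < μ) (ht0 : 0 ≤ t) (ht1 : t < 1) :
    HasSum (fun n : ℕ => Real.Gamma (μ + n) / (n.factorial * Real.Gamma μ) * t ^ n)
      ((1 - t) ^ (-μ) : ℝ) := by
  set r : ℝ := 1 - t with hr_def
  have hr : 0 < r := by simp [hr_def]; linarith
  set g : ℕ → ℝ := fun n => Real.Gamma (μ + n) / n.factorial * t ^ n with hg_def
  have hgnn : ∀ n, 0 ≤ g n := by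
    intro n
    have : (0:ℝ) < μ + n := by positivity
    have := Real.Gamma_pos_of_pos this
    positivity
  set C : ℝ := Real.Gamma μ * r ^ (-μ) with hC_def
  have hCnn : 0 ≤ C := by
    have := Real.Gamma_pos_of_pos hμ
    positivity
  -- key ENNReal computation
  have key : (∑' n, ENNReal.ofReal (g n)) = ENNReal.ofReal C := by
    have step1 : ∀ n : ℕ, ENNReal.ofReal (g n) =
        ∫⁻ x in Ioi (0:ℝ), ENNReal.ofReal
          (Real.exp (-x) * x ^ (μ + n - 1) * (t ^ n / n.factorial)) := by
      intro n
      have hpos : (0:ℝ) < μ + n := by positivity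
      have hint := Real.GammaIntegral_convergent hpos
      have hmul : IntegrableOn
          (fun x : ℝ => Real.exp (-x) * x ^ (μ + n - 1) * (t ^ n / n.factorial))
          (Ioi 0) := hint.mul_const _
      rw [← ofReal_integral_eq_lintegral_ofReal hmul]
      · congr 1
        rw [integral_mul_const, ← Real.Gamma_eq_integral hpos]
        simp [hg_def]
        ring
      · filter_upwards [ae_restrict_mem measurableSet_Ioi] with x hx
        have hx' : (0:ℝ) < x := hx
        positivity
    simp_rw [step1]
    rw [← lintegral_tsum]
    · have inner : ∀ x ∈ Ioi (0:ℝ),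
          (∑' n : ℕ, ENNReal.ofReal
            (Real.exp (-x) * x ^ (μ + n - 1) * (t ^ n / n.factorial)))
          = ENNReal.ofReal (x ^ (μ - 1) * Real.exp (-(r * x))) := by
        intro x hx
        have hx' : (0:ℝ) < x := hx
        have hterm : ∀ n : ℕ,
            Real.exp (-x) * x ^ (μ + n - 1) * (t ^ n / n.factorial)
            = (Real.exp (-x) * x ^ (μ - 1)) * ((x * t) ^ n / n.factorial) := by
          intro n
          have : x ^ (μ + n - 1) = x ^ (μ - 1) * x ^ (n : ℕ) := by
            rw [← Real.rpow_natCast x n, ← Real.rpow_add hx']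
            ring_nf
          rw [this, mul_pow]
          field_simp
        have hexp : HasSum (fun n : ℕ => (x * t) ^ n / n.factorial)
            (Real.exp (x * t)) := by
          rw [Real.exp_eq_exp_ℝ]
          exact NormedSpace.expSeries_div_hasSum_exp (x * t)
        have hsum : HasSum (fun n : ℕ =>
            (Real.exp (-x) * x ^ (μ - 1)) * ((x * t) ^ n / n.factorial))
            ((Real.exp (-x) * x ^ (μ - 1)) * Real.exp (x * t)) := hexp.mul_left _
        have hnn : ∀ n : ℕ, 0 ≤ (Real.exp (-x) * x ^ (μ - 1)) *
            ((x * t) ^ n / n.factorial) := by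
          intro n; positivity
        calc (∑' n : ℕ, ENNReal.ofReal
              (Real.exp (-x) * x ^ (μ + n - 1) * (t ^ n / n.factorial)))
            = ∑' n : ℕ, ENNReal.ofReal ((Real.exp (-x) * x ^ (μ - 1)) *
                ((x * t) ^ n / n.factorial)) := by
              congr 1; ext n; rw [hterm n]
          _ = ENNReal.ofReal ((Real.exp (-x) * x ^ (μ - 1)) * Real.exp (x * t)) := by
              rw [← ENNReal.ofReal_tsum_of_nonneg hnn hsum.summable, hsum.tsum_eq]
          _ = ENNReal.ofReal (x ^ (μ - 1) * Real.exp (-(r * x))) := by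
              congr 1
              rw [mul_comm (Real.exp (-x)) _, mul_assoc, ← Real.exp_add]
              congr 2
              simp [hr_def]; ring
      rw [setLIntegral_congr_fun measurableSet_Ioi
        inner]
      have hint2 : IntegrableOn (fun x : ℝ => x ^ (μ - 1) * Real.exp (-(r * x)))
          (Ioi 0) := by
        have := integrableOn_rpow_mul_exp_neg_mul_rpow
          (p := 1) (s := μ - 1) (b := r) (by linarith) one_pos hr
        refine this.congr_fun (fun x hx => ?_) measurableSet_Ioi
        beta_reduce
        rw [Real.rpow_one, neg_mul]
      rw [← ofReal_integral_eq_lintegral_ofReal hint2]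
      · congr 1
        have := Real.integral_rpow_mul_exp_neg_mul_Ioi hμ hr
        rw [hC_def]
        rw [show (∫ x in Ioi (0:ℝ), x ^ (μ - 1) * Real.exp (-(r * x)))
            = ∫ x in Ioi (0:ℝ), x ^ (μ - 1) * Real.exp (-(r * x)) from rfl, this]
        rw [Real.rpow_neg hr.le, one_div, Real.inv_rpow hr.le]
        ring
      · filter_upwards [ae_restrict_mem measurableSet_Ioi] with x hx
        have hx' : (0:ℝ) < x := hx
        positivity
    · intro n
      apply ENNReal.measurable_ofReal.comp_aemeasurable
      apply AEMeasurable.mul_const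
      apply AEMeasurable.mul
      · exact (Real.measurable_exp.comp measurable_neg).aemeasurable
      · exact (Measurable.aemeasurable (by measurability))
  -- extract real summability
  have hne : (∑' n, ENNReal.ofReal (g n)) ≠ ⊤ := by rw [key]; exact ENNReal.ofReal_ne_top
  have hsummable : Summable g := by
    have := ENNReal.summable_toReal hne
    refine this.congr fun n => ?_
    rw [ENNReal.toReal_ofReal (hgnn n)]
  have htsum : ∑' n, g n = C := by
    have h1 : ENNReal.ofReal (∑' n, g n) = ENNReal.ofReal C := by
      rw [ENNReal.ofReal_tsum_of_nonneg hgnn hsummable, key]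
    have := ENNReal.ofReal_eq_ofReal_iff (tsum_nonneg hgnn) hCnn |>.mp h1
    exact this
  have hhs : HasSum g C := htsum ▸ hsummable.hasSum
  have hΓ : Real.Gamma μ ≠ 0 := (Real.Gamma_pos_of_pos hμ).ne'
  have := hhs.div_const (Real.Gamma μ)
  have heq : (fun n => g n / Real.Gamma μ)
      = fun n : ℕ => Real.Gamma (μ + n) / (n.factorial * Real.Gamma μ) * t ^ n := by
    ext n
    have hfac : (n.factorial : ℝ) ≠ 0 := Nat.cast_ne_zero.mpr n.factorial_ne_zero
    field_simp [hg_def]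
    try ring
    simp only [hg_def]
    field_simp
  rw [heq] at this
  have hCeq : C / Real.Gamma μ = (1 - t) ^ (-μ) := by
    rw [hC_def]; field_simp
    rw [hr_def]
  rwa [hCeq] at this

/-- The mixture weights aₙ = C(n+μ−1,n)·H^{2n}/h^{μ+2n} of the η-μ power density
sum to 1 (used in Theorem 2 of the paper). -/
theorem eta_mu_weights_sum_one (η μ : ℝ) (hη : 0 < η) (hμ : 0 < μ) :
    HasSum
      (fun n : ℕ => Real.Gamma (μ + n) / (n.factorial * Real.Gamma μ) *
        (((η⁻¹ - η) / 4) ^ (2 * n) / ((2 + η⁻¹ + η) / 4) ^ (μ + 2 * (n : ℝ))))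
      1 := by
  set h : ℝ := (2 + η⁻¹ + η) / 4 with hh_def
  set H : ℝ := (η⁻¹ - η) / 4 with hH_def
  have hη' : η ≠ 0 := hη.ne'
  have hpos : 0 < h := by
    have : 0 < η⁻¹ := inv_pos.mpr hη
    rw [hh_def]; positivity
  have hid : h ^ 2 - H ^ 2 = h := by
    rw [hh_def, hH_def]; field_simp; ring
  set t : ℝ := H ^ 2 / h ^ 2 with ht_def
  have ht0 : 0 ≤ t := by positivity
  have ht1 : t < 1 := by
    rw [ht_def, div_lt_one (by positivity)]
    nlinarith
  have h1t : 1 - t = h⁻¹ := by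
    rw [ht_def]
    field_simp
    nlinarith
  have haux := binom_series_aux μ t hμ ht0 ht1
  have := haux.mul_right (h ^ (-μ) : ℝ)
  have hval : (1 - t) ^ (-μ) * h ^ (-μ) = 1 := by
    rw [h1t, Real.inv_rpow hpos.le]
    exact inv_mul_cancel₀ (Real.rpow_pos_of_pos hpos _).ne'
  rw [hval] at this
  refine this.congr_fun fun n => ?_
  have hterm : t ^ n * h ^ (-μ) = H ^ (2 * n) / h ^ (μ + 2 * (n : ℝ)) := by
    have h2n : h ^ (μ + 2 * (n : ℝ)) = h ^ μ * h ^ (2 * n : ℕ) := by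
      rw [show μ + 2 * (n : ℝ) = μ + ((2 * n : ℕ) : ℝ) by push_cast; ring,
        Real.rpow_add hpos, Real.rpow_natCast]
    rw [h2n, ht_def, Real.rpow_neg hpos.le, div_pow, ← pow_mul, ← pow_mul,
      ← div_eq_mul_inv, div_div, mul_comm (h ^ (2 * n))]
  rw [mul_assoc, hterm]
end

section
/- Let w̄ > 0, N₀ > 0, let W be an exponentially distributed real random variable with mean w̄ (density e^{−x/w̄}/w̄ for x ≥ 0), and let I be a nonnegative real random variable independent of W. Then E[ log(1 + W/(I+N₀)) ] = ∫_0^∞ E[ e^{−(eᵗ−1)·I/w̄} ] · e^{−(eᵗ−1)·N₀/w̄} dt. -/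
open MeasureTheory ProbabilityTheory

/-- Survival function of the exponential law with mean `w`. -/
lemma exp_law_survival {w : ℝ} (hw : 0 < w) {c : ℝ} (hc : 0 ≤ c) :
    ((volume : Measure ℝ).withDensity
        (fun x => ENNReal.ofReal (if 0 ≤ x then Real.exp (-x / w) / w else 0)))
      (Set.Ioi c) = ENNReal.ofReal (Real.exp (-c / w)) := by
  have hint : IntegrableOn (fun x => Real.exp (-x / w) / w) (Set.Ioi c) := by
    have h := (exp_neg_integrableOn_Ioi c (show (0:ℝ) < 1 / w by positivity)).div_const w
    have he : (fun x : ℝ => Real.exp (-(1 / w) * x) / w) = fun x => Real.exp (-x / w) / w := by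
      funext x; rw [show -(1 / w) * x = -x / w by ring]
    rwa [he] at h
  rw [withDensity_apply _ measurableSet_Ioi,
    setLIntegral_congr_fun measurableSet_Ioi
      (fun x (hx : c < x) => by rw [if_pos (hc.trans hx.le)]),
    ← ofReal_integral_eq_lintegral_ofReal hint
      (ae_of_all _ fun x => by positivity)]
  congr 1
  have hderiv : ∀ x ∈ Set.Ici c, HasDerivAt (fun x => -Real.exp (-x / w))
      (Real.exp (-x / w) / w) x := by
    intro x _
    have h1 : HasDerivAt (fun x : ℝ => -x / w) (-(1 / w)) x := by
      exact ((hasDerivAt_neg x).div_const w).congr_deriv (by ring)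
    have := (h1.exp).neg
    exact this.congr_deriv (by ring)
  have htend : Filter.Tendsto (fun x => -Real.exp (-x / w)) Filter.atTop (nhds 0) := by
    have h1 : Filter.Tendsto (fun x : ℝ => -x / w) Filter.atTop Filter.atBot := by
      simp only [neg_div]
      exact Filter.tendsto_neg_atTop_atBot.comp (Filter.tendsto_id.atTop_div_const hw)
    simpa using (Real.tendsto_exp_atBot.comp h1).neg
  have := integral_Ioi_of_hasDerivAt_of_tendsto
    (hderiv c Set.self_mem_Ici).continuousAt.continuousWithinAt
    (fun x hx => hderiv x (Set.mem_Ici_of_Ioi hx)) hint htend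
  rw [this]; simp

/-- Average rate over a Rayleigh-faded intended link (exponential power W with
mean w̄) with arbitrary independent nonnegative interference I:
E[log(1 + W/(I+N₀))] = ∫_0^∞ E[e^{−(eᵗ−1)I/w̄}] e^{−(eᵗ−1)N₀/w̄} dt. -/
theorem rayleigh_average_rate {Ω : Type*} [MeasureSpace Ω]
    [IsProbabilityMeasure (volume : Measure Ω)]
    (w N₀ : ℝ) (hw : 0 < w) (hN : 0 < N₀)
    (W I : Ω → ℝ) (hWm : Measurable W) (hIm : Measurable I)
    (hInn : ∀ ω, 0 ≤ I ω)
    (hindep : IndepFun W I (volume : Measure Ω))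
    (hlaw : Measure.map W volume = (volume : Measure ℝ).withDensity
      (fun x => ENNReal.ofReal (if 0 ≤ x then Real.exp (-x / w) / w else 0))) :
    (∫ ω, Real.log (1 + W ω / (I ω + N₀))) =
      ∫ t in Set.Ioi (0 : ℝ),
        (∫ ω, Real.exp (-(Real.exp t - 1) * I ω / w)) *
          Real.exp (-(Real.exp t - 1) * N₀ / w) := by
  set f : Ω → ℝ := fun ω => Real.log (1 + W ω / (I ω + N₀)) with hf
  have hIpos : ∀ ω, 0 < I ω + N₀ := fun ω => add_pos_of_nonneg_of_pos (hInn ω) hN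
  -- W is a.e. nonnegative
  have hW0 : ∀ᵐ ω, 0 ≤ W ω := by
    rw [ae_iff]
    have hpre : {ω | ¬ 0 ≤ W ω} = W ⁻¹' Set.Iio 0 := by
      ext ω; simp [not_le]
    have h2 : ∫⁻ x in Set.Iio (0:ℝ),
        ENNReal.ofReal (if 0 ≤ x then Real.exp (-x / w) / w else 0)
        = ∫⁻ _x in Set.Iio (0:ℝ), (0:ENNReal) := by
      refine setLIntegral_congr_fun measurableSet_Iio
        (fun x (hx : x < 0) => ?_)
      rw [if_neg (not_le.mpr hx)]
      exact ENNReal.ofReal_zero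
    rw [hpre, ← Measure.map_apply hWm measurableSet_Iio, hlaw,
      withDensity_apply _ measurableSet_Iio, h2]
    simp
  -- survival function for W
  have hsurv : ∀ c : ℝ, 0 ≤ c →
      volume {ω | c < W ω} = ENNReal.ofReal (Real.exp (-c / w)) := by
    intro c hc
    have : {ω | c < W ω} = W ⁻¹' Set.Ioi c := rfl
    rw [this, ← Measure.map_apply hWm measurableSet_Ioi, hlaw, exp_law_survival hw hc]
  -- measurability of f
  have hfm : Measurable f :=
    (measurable_const.add (hWm.div (hIm.add_const N₀))).log
  -- a.e. nonnegativity of f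
  have hf_nn : 0 ≤ᵐ[volume] f := by
    filter_upwards [hW0] with ω hω
    exact Real.log_nonneg (le_add_of_nonneg_right (div_nonneg hω (hIpos ω).le))
  -- key computation of the tail probability
  have key : ∀ t : ℝ, 0 < t →
      volume {ω | t < f ω} = ENNReal.ofReal
        ((∫ ω, Real.exp (-(Real.exp t - 1) * I ω / w)) *
          Real.exp (-(Real.exp t - 1) * N₀ / w)) := by
    intro t ht
    set c : ℝ := Real.exp t - 1 with hcdef
    have hc : 0 < c := by
      have := Real.exp_lt_exp.mpr ht
      simp only [Real.exp_zero] at this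
      linarith
    -- the event rewritten
    have hset : {ω | t < f ω} =ᵐ[volume] {ω | c * (I ω + N₀) < W ω} := by
      rw [Filter.eventuallyEq_set]
      filter_upwards [hW0] with ω hω
      have hu : (0:ℝ) < 1 + W ω / (I ω + N₀) := by
        have := div_nonneg hω (hIpos ω).le; linarith
      simp only [Set.mem_setOf_eq, hf]
      rw [Real.lt_log_iff_exp_lt hu]
      constructor
      · intro h
        have h2 : c < W ω / (I ω + N₀) := by linarith
        exact (lt_div_iff₀ (hIpos ω)).mp h2
      · intro h
        have h2 : c < W ω / (I ω + N₀) := (lt_div_iff₀ (hIpos ω)).mpr h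
        linarith
    rw [measure_congr hset]
    -- use independence
    have hmap : Measure.map (fun ω => (W ω, I ω)) volume =
        (Measure.map W volume).prod (Measure.map I volume) :=
      (indepFun_iff_map_prod_eq_prod_map_map hWm.aemeasurable hIm.aemeasurable).mp hindep
    have hS : MeasurableSet {p : ℝ × ℝ | c * (p.2 + N₀) < p.1} :=
      measurableSet_lt ((measurable_snd.add_const N₀).const_mul c) measurable_fst
    have hpre : {ω | c * (I ω + N₀) < W ω} =
        (fun ω => (W ω, I ω)) ⁻¹' {p : ℝ × ℝ | c * (p.2 + N₀) < p.1} := rfl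
    haveI : IsProbabilityMeasure (Measure.map I volume) :=
      Measure.isProbabilityMeasure_map hIm.aemeasurable
    rw [hpre, ← Measure.map_apply (hWm.prodMk hIm) hS, hmap,
      Measure.prod_apply_symm hS]
    have hI0 : ∀ᵐ y ∂(Measure.map I volume), 0 ≤ y :=
      (ae_map_iff hIm.aemeasurable measurableSet_Ici).mpr (ae_of_all _ hInn)
    have hcongr : ∫⁻ y, (Measure.map W volume) ((fun x => (x, y)) ⁻¹' {p : ℝ × ℝ | c * (p.2 + N₀) < p.1}) ∂(Measure.map I volume)
        = ∫⁻ y, ENNReal.ofReal (Real.exp (-(c * (y + N₀)) / w)) ∂(Measure.map I volume) := by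
      refine lintegral_congr_ae ?_
      filter_upwards [hI0] with y hy
      have hpre2 : (fun x => (x, y)) ⁻¹' {p : ℝ × ℝ | c * (p.2 + N₀) < p.1} = Set.Ioi (c * (y + N₀)) := rfl
      have hcy : 0 ≤ c * (y + N₀) := mul_nonneg hc.le (by linarith)
      rw [hpre2, hlaw, exp_law_survival hw hcy]
    have hgm : Measurable fun y : ℝ => ENNReal.ofReal (Real.exp (-(c * (y + N₀)) / w)) :=
      ENNReal.measurable_ofReal.comp (Real.measurable_exp.comp
        (((measurable_id.add_const N₀).const_mul c).neg.div_const w))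
    rw [hcongr, lintegral_map hgm hIm]
    have hintg : Integrable (fun ω => Real.exp (-(c * (I ω + N₀)) / w)) volume := by
      refine (integrable_const (1:ℝ)).mono' ?_ (ae_of_all _ fun ω => ?_)
      · exact (Real.measurable_exp.comp (((hIm.add_const N₀).const_mul c).neg.div_const w)).aestronglyMeasurable
      · rw [Real.norm_eq_abs, abs_of_pos (Real.exp_pos _)]
        refine Real.exp_le_one_iff.mpr (div_nonpos_of_nonpos_of_nonneg ?_ hw.le)
        have : 0 ≤ c * (I ω + N₀) := mul_nonneg hc.le (hIpos ω).le
        linarith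
    rw [← ofReal_integral_eq_lintegral_ofReal hintg (ae_of_all _ fun ω => (Real.exp_pos _).le)]
    congr 1
    have : (fun ω => Real.exp (-(c * (I ω + N₀)) / w)) =
        fun ω => Real.exp (-c * I ω / w) * Real.exp (-c * N₀ / w) := by
      funext ω
      rw [← Real.exp_add]
      congr 1
      ring
    rw [this, integral_mul_const]
  -- integrability of f
  have hfi : Integrable f volume := by
    refine ⟨hfm.aestronglyMeasurable, ?_⟩
    rw [hasFiniteIntegral_iff_ofReal hf_nn,
      lintegral_eq_lintegral_meas_lt volume hf_nn hfm.aemeasurable]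
    have hb : (0:ℝ) < N₀ / w := div_pos hN hw
    calc ∫⁻ t in Set.Ioi 0, volume {a | t < f a}
        ≤ ∫⁻ t in Set.Ioi 0, ENNReal.ofReal (Real.exp (-(N₀ / w) * t)) := by
          refine setLIntegral_mono
            (ENNReal.measurable_ofReal.comp (Real.measurable_exp.comp
              (measurable_id.const_mul (-(N₀ / w))))) fun t ht => ?_
          rw [key t ht]
          refine ENNReal.ofReal_le_ofReal ?_
          have hexple : ∀ ω : Ω, Real.exp (-(Real.exp t - 1) * I ω / w) ≤ 1 := by
            intro ω
            refine Real.exp_le_one_iff.mpr (div_nonpos_of_nonpos_of_nonneg ?_ hw.le)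
            have h1 : (1:ℝ) ≤ Real.exp t := by
              have := Real.exp_lt_exp.mpr ht; simp only [Real.exp_zero] at this; linarith
            have : 0 ≤ (Real.exp t - 1) * I ω := mul_nonneg (by linarith) (hInn ω)
            linarith
          have hintg2 : Integrable (fun ω => Real.exp (-(Real.exp t - 1) * I ω / w)) volume := by
            refine (integrable_const (1:ℝ)).mono'
              (Real.measurable_exp.comp
                ((hIm.const_mul (-(Real.exp t - 1))).div_const w)).aestronglyMeasurable
              (ae_of_all _ fun ω => ?_)
            rw [Real.norm_eq_abs, abs_of_pos (Real.exp_pos _)]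
            exact hexple ω
          have hE1 : (∫ ω, Real.exp (-(Real.exp t - 1) * I ω / w)) ≤ 1 := by
            calc (∫ ω, Real.exp (-(Real.exp t - 1) * I ω / w))
                ≤ ∫ _ω : Ω, (1:ℝ) := integral_mono hintg2 (integrable_const 1) hexple
              _ = 1 := by simp
          have hE0 : 0 ≤ (∫ ω, Real.exp (-(Real.exp t - 1) * I ω / w)) :=
            integral_nonneg fun ω => (Real.exp_pos _).le
          have hK : Real.exp (-(Real.exp t - 1) * N₀ / w) ≤ Real.exp (-(N₀ / w) * t) := by
            refine Real.exp_le_exp.mpr ?_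
            have h1 : -(Real.exp t - 1) * N₀ ≤ -(N₀ * t) := by
              nlinarith [Real.add_one_le_exp t]
            calc -(Real.exp t - 1) * N₀ / w ≤ -(N₀ * t) / w := (div_le_div_iff_of_pos_right hw).mpr h1
              _ = -(N₀ / w) * t := by ring
          calc (∫ ω, Real.exp (-(Real.exp t - 1) * I ω / w)) * Real.exp (-(Real.exp t - 1) * N₀ / w)
              ≤ 1 * Real.exp (-(Real.exp t - 1) * N₀ / w) :=
                mul_le_mul_of_nonneg_right hE1 (Real.exp_pos _).le
            _ = Real.exp (-(Real.exp t - 1) * N₀ / w) := one_mul _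
            _ ≤ Real.exp (-(N₀ / w) * t) := hK
      _ < ⊤ := by
          rw [← ofReal_integral_eq_lintegral_ofReal (exp_neg_integrableOn_Ioi 0 hb)
            (ae_of_all _ fun x => (Real.exp_pos _).le)]
          exact ENNReal.ofReal_lt_top
  -- layer cake
  rw [hfi.integral_eq_integral_meas_lt hf_nn]
  refine setIntegral_congr_fun measurableSet_Ioi fun t ht => ?_
  rw [measureReal_def, key t ht, ENNReal.toReal_ofReal]
  exact mul_nonneg (integral_nonneg fun ω => (Real.exp_pos _).le) (Real.exp_pos _).le
end

section
/- Let m ≥ 1 be a natural number, w̄ > 0, N₀ > 0, let W be a Gamma-distributed real random variable with shape m and rate m/w̄ (density (m/w̄)^m x^{m−1} e^{−mx/w̄}/Γ(m) for x > 0), and let I be a nonnegative real random variable independent of W, with Laplace transform L_I(s) = E[e^{−sI}]. Then E[ log(1 + W/(I+N₀)) ] = (w̄/(m·N₀)) · ∫_0^∞ g_m( w̄·x/(m·N₀) ) · L_I(x/N₀) · e^{−x} dx, where g_m(z) = (1/z)·(1 − (1+z)^{−m}). -/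
open MeasureTheory ProbabilityTheory

open Set Real Filter

namespace NakAux

lemma integral_exp_Ioi {t : ℝ} (ht : 0 < t) :
    ∫ x in Ioi (0:ℝ), Real.exp (-(t * x)) = 1 / t := by
  have h := Real.integral_rpow_mul_exp_neg_mul_Ioi one_pos ht
  simpa using h

lemma lintegral_exp_Ioi {t : ℝ} (ht : 0 < t) :
    ∫⁻ x in Ioi (0:ℝ), ENNReal.ofReal (Real.exp (-(t * x))) = ENNReal.ofReal (1 / t) := by
  rw [← ofReal_integral_eq_lintegral_ofReal, integral_exp_Ioi ht]
  · exact (by simpa [neg_mul] using exp_neg_integrableOn_Ioi 0 ht : IntegrableOn (fun x => Real.exp (-(t * x))) (Ioi 0))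
  · exact Filter.Eventually.of_forall fun x => (Real.exp_pos _).le

end NakAux

namespace NakAux

lemma interval_exp (x : ℝ) (hx : 0 < x) (b c : ℝ) :
    ∫ t in b..c, Real.exp (-(t * x)) = (Real.exp (-(b * x)) - Real.exp (-(c * x))) / x := by
  have hder : ∀ t ∈ Set.uIcc b c, HasDerivAt (fun t => -Real.exp (-(t * x)) / x)
      (Real.exp (-(t * x))) t := by
    intro t _
    have h1 : HasDerivAt (fun t : ℝ => -(t * x)) (-x) t := (hasDerivAt_mul_const x).neg
    have h2 := (h1.exp.neg.div_const x)
    have h3 : -(Real.exp (-(t * x)) * -x) / x = Real.exp (-(t * x)) := by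
      rw [div_eq_iff hx.ne']; ring
    rw [h3] at h2
    exact h2
  have hint : IntervalIntegrable (fun t => Real.exp (-(t * x))) volume b c :=
    (Real.continuous_exp.comp (by continuity : Continuous fun t : ℝ => -(t * x))).intervalIntegrable _ _
  rw [intervalIntegral.integral_eq_sub_of_hasDerivAt hder hint]
  ring

lemma frullani {a b : ℝ} (ha : 0 ≤ a) (hb : 0 < b) :
    ∫⁻ x in Ioi (0:ℝ), ENNReal.ofReal
        ((Real.exp (-(b * x)) - Real.exp (-((a + b) * x))) / x)
      = ENNReal.ofReal (Real.log (1 + a / b)) := by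
  have hbc : b ≤ a + b := by linarith
  -- step 1: rewrite integrand as an inner lintegral over t
  have step1 : ∀ x ∈ Ioi (0:ℝ),
      ENNReal.ofReal ((Real.exp (-(b * x)) - Real.exp (-((a + b) * x))) / x)
        = ∫⁻ t in Ioc b (a + b), ENNReal.ofReal (Real.exp (-(t * x))) := by
    intro x hx
    rw [mem_Ioi] at hx
    rw [← interval_exp x hx b (a + b), intervalIntegral.integral_of_le hbc,
      ← ofReal_integral_eq_lintegral_ofReal]
    · exact ((Real.continuous_exp.comp (by continuity : Continuous fun t : ℝ => -(t * x))).integrableOn_Ioc)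
    · exact Filter.Eventually.of_forall fun t => (Real.exp_pos _).le
  rw [setLIntegral_congr_fun measurableSet_Ioi step1]
  rw [lintegral_lintegral_swap]
  · have step2 : ∀ t ∈ Ioc b (a + b),
        ∫⁻ x in Ioi (0:ℝ), ENNReal.ofReal (Real.exp (-(t * x))) = ENNReal.ofReal (1 / t) :=
      fun t ht => lintegral_exp_Ioi (lt_of_lt_of_le hb ht.1.le)
    rw [setLIntegral_congr_fun measurableSet_Ioc step2]
    rw [← ofReal_integral_eq_lintegral_ofReal]
    · rw [← intervalIntegral.integral_of_le hbc,
        _root_.integral_one_div_of_pos hb (by linarith)]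
      congr 1
      rw [add_div, div_self hb.ne', add_comm]
    · have hc : ContinuousOn (fun t : ℝ => 1 / t) (Icc b (a + b)) := by
        apply ContinuousOn.div continuousOn_const continuousOn_id
        intro t ht; exact (hb.trans_le ht.1).ne'
      exact hc.integrableOn_Icc.mono_set Ioc_subset_Icc_self
    · refine (ae_restrict_iff' measurableSet_Ioc).2 (ae_of_all _ fun t ht => ?_)
      have h0 : 0 < t := hb.trans ht.1
      positivity
  · apply Measurable.aemeasurable
    exact (measurable_snd.mul measurable_fst).neg.exp.ennreal_ofReal

end NakAux

namespace NakAux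

lemma gamma_integrand_eq (m : ℕ) (hm : 1 ≤ m) {w s x : ℝ} (hx : 0 < x) :
    ((m : ℝ) / w) ^ m * x ^ (m - 1) * Real.exp (-((m : ℝ) / w) * x) / Real.Gamma m
        * Real.exp (-(s * x))
      = (((m : ℝ) / w) ^ m / Real.Gamma m)
          * (x ^ ((m : ℝ) - 1) * Real.exp (-((s + (m : ℝ) / w) * x))) := by
  have hpow : x ^ (m - 1) = x ^ ((m : ℝ) - 1) := by
    rw [← Real.rpow_natCast x (m - 1)]
    congr 1
    rw [Nat.cast_sub hm, Nat.cast_one]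
  calc ((m : ℝ) / w) ^ m * x ^ (m - 1) * Real.exp (-((m : ℝ) / w) * x) / Real.Gamma m
        * Real.exp (-(s * x))
      = (((m : ℝ) / w) ^ m / Real.Gamma m)
          * (x ^ ((m : ℝ) - 1) * (Real.exp (-((m : ℝ) / w) * x) * Real.exp (-(s * x)))) := by
        rw [hpow]; ring
    _ = _ := by
        rw [← Real.exp_add]
        ring_nf

lemma gamma_laplace_integrable (m : ℕ) (hm : 1 ≤ m) {w s : ℝ} (hw : 0 < w) (hs : 0 < s) :
    MeasureTheory.IntegrableOn
      (fun x => ((m : ℝ) / w) ^ m * x ^ (m - 1) * Real.exp (-((m : ℝ) / w) * x) / Real.Gamma m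
        * Real.exp (-(s * x))) (Ioi 0) := by
  have hm0 : (0 : ℝ) < m := by exact_mod_cast hm
  have hr : 0 < s + (m : ℝ) / w := by positivity
  have base := integrableOn_rpow_mul_exp_neg_mul_rpow
    (s := (m : ℝ) - 1) (p := 1) (b := s + (m : ℝ) / w) (by linarith) one_pos hr
  have base2 := base.const_mul (((m : ℝ) / w) ^ m / Real.Gamma m)
  apply base2.congr
  refine (ae_restrict_iff' measurableSet_Ioi).2 (ae_of_all _ fun x hx => ?_)
  rw [mem_Ioi] at hx
  have h := gamma_integrand_eq m hm (w := w) (s := s) hx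
  simp only [Real.rpow_one]
  rw [neg_mul]
  exact h.symm

lemma gamma_laplace_integral (m : ℕ) (hm : 1 ≤ m) {w s : ℝ} (hw : 0 < w) (hs : 0 < s) :
    ∫ x in Ioi (0:ℝ),
        ((m : ℝ) / w) ^ m * x ^ (m - 1) * Real.exp (-((m : ℝ) / w) * x) / Real.Gamma m
          * Real.exp (-(s * x))
      = ((1 + s * w / m) ^ m)⁻¹ := by
  have hm0 : (0 : ℝ) < m := by exact_mod_cast hm
  have hr : 0 < s + (m : ℝ) / w := by positivity
  have hΓ : Real.Gamma m ≠ 0 := (Real.Gamma_pos_of_pos hm0).ne'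
  rw [MeasureTheory.setIntegral_congr_fun measurableSet_Ioi
    (fun x hx => gamma_integrand_eq m hm (mem_Ioi.1 hx) (w := w) (s := s))]
  rw [MeasureTheory.integral_const_mul,
    Real.integral_rpow_mul_exp_neg_mul_Ioi hm0 hr,
    Real.rpow_natCast]
  have hw' : w ≠ 0 := hw.ne'
  have hm' : (m : ℝ) ≠ 0 := hm0.ne'
  have hr' : s + (m : ℝ) / w ≠ 0 := hr.ne'
  have hd : (0:ℝ) < 1 + s * w / m := by positivity
  have hbase : ((m : ℝ) / w) * (1 / (s + (m : ℝ) / w)) = (1 + s * w / m)⁻¹ := by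
    have hmul : (1 + s * w / m) * (((m : ℝ) / w) * (1 / (s + (m : ℝ) / w))) = 1 := by
      field_simp
      ring
    exact eq_inv_of_mul_eq_one_right hmul
  have h1 : (((m : ℝ) / w) ^ m / Real.Gamma m) * ((1 / (s + (m : ℝ) / w)) ^ m * Real.Gamma m)
      = (((m : ℝ) / w) * (1 / (s + (m : ℝ) / w))) ^ m := by
    rw [mul_pow]
    field_simp
  rw [h1, hbase, inv_pow]

end NakAux

open NakAux

/-- Nakagami-m average rate formula (equation (38) of the paper): for a
Gamma(m, m/w̄)-distributed intended power W and arbitrary independent nonnegative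
interference I with Laplace transform L_I,
E[log(1 + W/(I+N₀))] = (w̄/(mN₀)) ∫_0^∞ g_m(w̄x/(mN₀)) L_I(x/N₀) e^{−x} dx
with g_m(z) = (1/z)(1 − (1+z)^{−m}). -/
theorem nakagami_average_rate {Ω : Type*} [MeasureSpace Ω]
    [IsProbabilityMeasure (volume : Measure Ω)]
    (m : ℕ) (hm : 1 ≤ m) (w N₀ : ℝ) (hw : 0 < w) (hN : 0 < N₀)
    (W I : Ω → ℝ) (hWm : Measurable W) (hIm : Measurable I)
    (hInn : ∀ ω, 0 ≤ I ω)
    (hindep : IndepFun W I (volume : Measure Ω))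
    (hlaw : Measure.map W volume = (volume : Measure ℝ).withDensity
      (fun x => ENNReal.ofReal (if 0 < x then
        ((m : ℝ) / w) ^ m * x ^ (m - 1) * Real.exp (-((m : ℝ) / w) * x) /
          Real.Gamma m else 0))) :
    (∫ ω, Real.log (1 + W ω / (I ω + N₀))) =
      w / ((m : ℝ) * N₀) *
        ∫ x in Set.Ioi (0 : ℝ),
          (1 / (w * x / ((m : ℝ) * N₀)) *
            (1 - ((1 + w * x / ((m : ℝ) * N₀)) ^ m)⁻¹)) *
          (∫ ω, Real.exp (-(x / N₀) * I ω)) * Real.exp (-x) := by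
  have hm0 : (0 : ℝ) < m := by exact_mod_cast hm
  have hIb : ∀ ω, 0 < I ω + N₀ := fun ω => by have := hInn ω; linarith
  -- W is a.e. nonnegative
  have hset : (volume : Measure Ω) {ω | W ω < 0} = 0 := by
    have h1 : {ω : Ω | W ω < 0} = W ⁻¹' (Iio 0) := rfl
    rw [h1, ← Measure.map_apply hWm measurableSet_Iio, hlaw,
      withDensity_apply _ measurableSet_Iio,
      setLIntegral_congr_fun measurableSet_Iio (fun x (hx : x < 0) => by
        rw [if_neg (not_lt.2 hx.le), ENNReal.ofReal_zero])]
    simp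
  have hW0 : ∀ᵐ ω : Ω, 0 ≤ W ω := by
    rw [ae_iff]; simpa only [not_le] using hset
  -- nonnegativity of the Laplace transform of I
  have hLIr_nonneg : ∀ x : ℝ, 0 ≤ ∫ ω, Real.exp (-(x / N₀) * I ω) :=
    fun x => integral_nonneg fun ω => (Real.exp_pos _).le
  have hIexp_meas : ∀ x : ℝ, Measurable fun ω => Real.exp (-(x / N₀) * I ω) :=
    fun x => (hIm.const_mul (-(x / N₀))).exp
  have hIexp_int : ∀ x : ℝ, 0 ≤ x → Integrable (fun ω => Real.exp (-(x / N₀) * I ω)) := by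
    intro x hx
    refine Integrable.mono' (integrable_const 1) (hIexp_meas x).aestronglyMeasurable
      (ae_of_all _ fun ω => ?_)
    rw [Real.norm_eq_abs, Real.abs_exp]
    apply Real.exp_le_one_iff.mpr
    simp only [neg_mul]
    exact neg_nonpos.2 (mul_nonneg (div_nonneg hx hN.le) (hInn ω))
  have hLI : ∀ x : ℝ, 0 ≤ x →
      (∫⁻ ω, ENNReal.ofReal (Real.exp (-(x / N₀) * I ω)))
        = ENNReal.ofReal (∫ ω, Real.exp (-(x / N₀) * I ω)) :=
    fun x hx => (ofReal_integral_eq_lintegral_ofReal (hIexp_int x hx)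
      (ae_of_all _ fun ω => (Real.exp_pos _).le)).symm
  -- density is measurable
  have hdens : Measurable fun x : ℝ => ENNReal.ofReal (if 0 < x then
      ((m : ℝ) / w) ^ m * x ^ (m - 1) * Real.exp (-((m : ℝ) / w) * x) / Real.Gamma m else 0) := by
    apply Measurable.ennreal_ofReal
    exact Measurable.ite measurableSet_Ioi
      (((measurable_const.mul (measurable_id.pow_const (m - 1))).mul
        ((measurable_id.const_mul (-((m : ℝ) / w))).exp)).div_const _) measurable_const
  -- Laplace transform of W (Gamma distribution)
  have hLW : ∀ x : ℝ, 0 < x →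
      (∫⁻ ω, ENNReal.ofReal (Real.exp (-(x / N₀ * W ω))))
        = ENNReal.ofReal (((1 + w * x / ((m : ℝ) * N₀)) ^ m)⁻¹) := by
    intro x hx
    have hs : 0 < x / N₀ := div_pos hx hN
    have hg : Measurable fun y : ℝ => ENNReal.ofReal (Real.exp (-(x / N₀ * y))) :=
      ((measurable_id.const_mul (x / N₀)).neg.exp).ennreal_ofReal
    have hmap : (∫⁻ ω, ENNReal.ofReal (Real.exp (-(x / N₀ * W ω))))
        = ∫⁻ y, ENNReal.ofReal (Real.exp (-(x / N₀ * y))) ∂(Measure.map W volume) :=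
      (lintegral_map hg hWm).symm
    rw [hmap, hlaw, lintegral_withDensity_eq_lintegral_mul _ hdens hg]
    have heq : ((fun y : ℝ => ENNReal.ofReal (if 0 < y then
            ((m : ℝ) / w) ^ m * y ^ (m - 1) * Real.exp (-((m : ℝ) / w) * y) / Real.Gamma m else 0))
          * fun y : ℝ => ENNReal.ofReal (Real.exp (-(x / N₀ * y))))
        = (Ioi (0 : ℝ)).indicator (fun y => ENNReal.ofReal
            (((m : ℝ) / w) ^ m * y ^ (m - 1) * Real.exp (-((m : ℝ) / w) * y) / Real.Gamma m
              * Real.exp (-(x / N₀ * y)))) := by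
      funext y
      by_cases hy : 0 < y
      · simp only [Pi.mul_apply, if_pos hy, Set.indicator_of_mem (mem_Ioi.2 hy)]
        rw [← ENNReal.ofReal_mul (by positivity)]
      · simp only [Pi.mul_apply, if_neg hy,
          Set.indicator_of_notMem (by simpa using hy : y ∉ Ioi (0:ℝ)), ENNReal.ofReal_zero,
          zero_mul]
    rw [heq, lintegral_indicator measurableSet_Ioi _,
      ← ofReal_integral_eq_lintegral_ofReal (gamma_laplace_integrable m hm hw hs)
        ((ae_restrict_iff' measurableSet_Ioi).2 (ae_of_all _ fun y hy => by
          have hy0 : 0 < y := hy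
          positivity)),
      gamma_laplace_integral m hm hw hs]
    congr 3
    ring
  -- independence of the transformed variables
  have hWIexp : ∀ x : ℝ,
      (∫⁻ ω, ENNReal.ofReal (Real.exp (-(x / N₀ * W ω)))
          * ENNReal.ofReal (Real.exp (-(x / N₀) * I ω)))
        = (∫⁻ ω, ENNReal.ofReal (Real.exp (-(x / N₀ * W ω))))
          * ∫⁻ ω, ENNReal.ofReal (Real.exp (-(x / N₀) * I ω)) := by
    intro x
    have hφ : Measurable fun r : ℝ => ENNReal.ofReal (Real.exp (-(x / N₀ * r))) :=
      ((measurable_id.const_mul (x / N₀)).neg.exp).ennreal_ofReal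
    have hψ : Measurable fun r : ℝ => ENNReal.ofReal (Real.exp (-(x / N₀) * r)) :=
      ((measurable_id.const_mul (-(x / N₀))).exp).ennreal_ofReal
    exact lintegral_mul_eq_lintegral_mul_lintegral_of_indepFun''
      ((hφ.comp hWm).aemeasurable) ((hψ.comp hIm).aemeasurable) (hindep.comp hφ hψ)
  -- inner integral computation for fixed x > 0
  have hinner : ∀ x : ℝ, 0 < x →
      (∫⁻ ω, ENNReal.ofReal ((Real.exp (-((I ω + N₀) / N₀ * x))
          - Real.exp (-((W ω / N₀ + (I ω + N₀) / N₀) * x))) / x))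
        = ENNReal.ofReal ((Real.exp (-x) * (∫ ω, Real.exp (-(x / N₀) * I ω))
            - Real.exp (-x) * (((1 + w * x / ((m : ℝ) * N₀)) ^ m)⁻¹
              * ∫ ω, Real.exp (-(x / N₀) * I ω))) * x⁻¹) := by
    intro x hx
    have hA : ∀ ω : Ω, Real.exp (-((I ω + N₀) / N₀ * x))
        = Real.exp (-x) * Real.exp (-(x / N₀) * I ω) := by
      intro ω
      rw [← Real.exp_add]
      congr 1
      field_simp
      ring
    have hB : ∀ ω : Ω, Real.exp (-((W ω / N₀ + (I ω + N₀) / N₀) * x))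
        = Real.exp (-x) * (Real.exp (-(x / N₀ * W ω)) * Real.exp (-(x / N₀) * I ω)) := by
      intro ω
      rw [← Real.exp_add, ← Real.exp_add]
      congr 1
      field_simp
      ring
    have claim1 : ∀ ω : Ω, ENNReal.ofReal ((Real.exp (-((I ω + N₀) / N₀ * x))
          - Real.exp (-((W ω / N₀ + (I ω + N₀) / N₀) * x))) / x)
        = (ENNReal.ofReal (Real.exp (-x) * Real.exp (-(x / N₀) * I ω))
            - ENNReal.ofReal (Real.exp (-x)
              * (Real.exp (-(x / N₀ * W ω)) * Real.exp (-(x / N₀) * I ω))))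
            * (ENNReal.ofReal x)⁻¹ := by
      intro ω
      rw [hA, hB, div_eq_mul_inv, ENNReal.ofReal_mul' (inv_nonneg.2 hx.le),
        ENNReal.ofReal_inv_of_pos hx, ENNReal.ofReal_sub _ (by positivity)]
    rw [lintegral_congr claim1]
    have hmeasA : Measurable fun ω : Ω =>
        ENNReal.ofReal (Real.exp (-x) * Real.exp (-(x / N₀) * I ω)) :=
      ((hIexp_meas x).const_mul _).ennreal_ofReal
    have hmeasWe : Measurable fun ω : Ω => Real.exp (-(x / N₀ * W ω)) :=
      (hWm.const_mul (x / N₀)).neg.exp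
    have hmeasB : Measurable fun ω : Ω => ENNReal.ofReal (Real.exp (-x)
        * (Real.exp (-(x / N₀ * W ω)) * Real.exp (-(x / N₀) * I ω))) :=
      ((hmeasWe.mul (hIexp_meas x)).const_mul _).ennreal_ofReal
    rw [lintegral_mul_const'' _ (f := fun ω => ENNReal.ofReal (Real.exp (-x) * Real.exp (-(x / N₀) * I ω)) - ENNReal.ofReal (Real.exp (-x) * (Real.exp (-(x / N₀ * W ω)) * Real.exp (-(x / N₀) * I ω)))) (hmeasA.sub hmeasB).aemeasurable]
    have hAval : (∫⁻ ω, ENNReal.ofReal (Real.exp (-x) * Real.exp (-(x / N₀) * I ω)))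
        = ENNReal.ofReal (Real.exp (-x) * ∫ ω, Real.exp (-(x / N₀) * I ω)) := by
      simp_rw [ENNReal.ofReal_mul (Real.exp_pos (-x)).le]
      rw [lintegral_const_mul _ (hIexp_meas x).ennreal_ofReal, hLI x hx.le,
        ← ENNReal.ofReal_mul (Real.exp_pos (-x)).le]
    have hBval : (∫⁻ ω, ENNReal.ofReal (Real.exp (-x)
          * (Real.exp (-(x / N₀ * W ω)) * Real.exp (-(x / N₀) * I ω))))
        = ENNReal.ofReal (Real.exp (-x) * (((1 + w * x / ((m : ℝ) * N₀)) ^ m)⁻¹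
            * ∫ ω, Real.exp (-(x / N₀) * I ω)) ) := by
      simp_rw [ENNReal.ofReal_mul (Real.exp_pos (-x)).le,
        ENNReal.ofReal_mul (Real.exp_pos (-(x / N₀ * W _))).le]
      rw [lintegral_const_mul _ (f := fun ω => ENNReal.ofReal (Real.exp (-(x / N₀ * W ω))) * ENNReal.ofReal (Real.exp (-(x / N₀) * I ω))) ((hmeasWe.ennreal_ofReal).mul (hIexp_meas x).ennreal_ofReal),
        hWIexp x, hLW x hx, hLI x hx.le, ← ENNReal.ofReal_mul (by positivity),
        ← ENNReal.ofReal_mul (Real.exp_pos (-x)).le]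
    have hle : (fun ω : Ω => ENNReal.ofReal (Real.exp (-x)
          * (Real.exp (-(x / N₀ * W ω)) * Real.exp (-(x / N₀) * I ω))))
        ≤ᵐ[volume] fun ω : Ω => ENNReal.ofReal (Real.exp (-x) * Real.exp (-(x / N₀) * I ω)) := by
      filter_upwards [hW0] with ω hω
      apply ENNReal.ofReal_le_ofReal
      have h1 : Real.exp (-(x / N₀ * W ω)) ≤ 1 := by
        apply Real.exp_le_one_iff.mpr
        have : 0 ≤ x / N₀ * W ω := mul_nonneg (div_nonneg hx.le hN.le) hω
        linarith
      nlinarith [mul_pos (Real.exp_pos (-x)) (Real.exp_pos (-(x / N₀) * I ω)),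
        (Real.exp_pos (-(x / N₀ * W ω))).le]
    rw [lintegral_sub hmeasB (by rw [hBval]; exact ENNReal.ofReal_ne_top) hle, hAval, hBval,
      ← ENNReal.ofReal_sub _ (by positivity), ← ENNReal.ofReal_inv_of_pos hx,
      ← ENNReal.ofReal_mul' (inv_nonneg.2 hx.le)]
  -- main computation
  have hmain : (∫⁻ ω, ENNReal.ofReal (Real.log (1 + W ω / (I ω + N₀))))
      = ∫⁻ x in Ioi (0 : ℝ), ENNReal.ofReal ((Real.exp (-x)
          * (∫ ω, Real.exp (-(x / N₀) * I ω))
          - Real.exp (-x) * (((1 + w * x / ((m : ℝ) * N₀)) ^ m)⁻¹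
            * ∫ ω, Real.exp (-(x / N₀) * I ω))) * x⁻¹) := by
    have step1 : (∫⁻ ω, ENNReal.ofReal (Real.log (1 + W ω / (I ω + N₀))))
        = ∫⁻ ω, ∫⁻ x in Ioi (0 : ℝ), ENNReal.ofReal ((Real.exp (-((I ω + N₀) / N₀ * x))
            - Real.exp (-((W ω / N₀ + (I ω + N₀) / N₀) * x))) / x) := by
      apply lintegral_congr_ae
      filter_upwards [hW0] with ω hω
      have hb := hIb ω
      have h := frullani (a := W ω / N₀) (b := (I ω + N₀) / N₀)
        (div_nonneg hω hN.le) (div_pos hb hN)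
      have harg : W ω / (I ω + N₀) = (W ω / N₀) / ((I ω + N₀) / N₀) := by
        rw [div_div_div_cancel_right₀]
        exact hN.ne'
      rw [harg]
      exact h.symm
    have hmeas_prod : AEMeasurable (Function.uncurry fun (ω : Ω) (x : ℝ) =>
        ENNReal.ofReal ((Real.exp (-((I ω + N₀) / N₀ * x))
          - Real.exp (-((W ω / N₀ + (I ω + N₀) / N₀) * x))) / x))
        ((volume : Measure Ω).prod ((volume : Measure ℝ).restrict (Ioi 0))) := by
      apply Measurable.aemeasurable
      apply Measurable.ennreal_ofReal
      apply Measurable.div _ measurable_snd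
      apply Measurable.sub
      · exact ((((hIm.comp measurable_fst).add_const N₀).div_const N₀).mul
          measurable_snd).neg.exp
      · exact (((((hWm.comp measurable_fst).div_const N₀).add
          (((hIm.comp measurable_fst).add_const N₀).div_const N₀)).mul measurable_snd).neg).exp
    rw [step1, lintegral_lintegral_swap hmeas_prod]
    exact setLIntegral_congr_fun measurableSet_Ioi
      (fun x hx => hinner x (mem_Ioi.1 hx))
  -- measurability of the Laplace transform of I as a function of x
  have hLI_meas : StronglyMeasurable fun x : ℝ => ∫ ω, Real.exp (-(x / N₀) * I ω) := by
    apply MeasureTheory.StronglyMeasurable.integral_prod_right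
    exact (((measurable_fst.div_const N₀).neg.mul (hIm.comp measurable_snd)).exp).stronglyMeasurable
  have hc_meas : Measurable fun x : ℝ => ((1 + w * x / ((m : ℝ) * N₀)) ^ m)⁻¹ :=
    ((((measurable_id.const_mul w).div_const ((m : ℝ) * N₀)).const_add 1).pow_const m).inv
  have hf_meas : Measurable fun x : ℝ => (Real.exp (-x)
      * (∫ ω, Real.exp (-(x / N₀) * I ω))
      - Real.exp (-x) * (((1 + w * x / ((m : ℝ) * N₀)) ^ m)⁻¹
        * ∫ ω, Real.exp (-(x / N₀) * I ω))) * x⁻¹ := by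
    apply Measurable.mul _ measurable_inv
    exact ((measurable_id.neg.exp).mul hLI_meas.measurable).sub
      ((measurable_id.neg.exp).mul (hc_meas.mul hLI_meas.measurable))
  have hf0 : 0 ≤ᵐ[(volume : Measure ℝ).restrict (Ioi 0)] fun x : ℝ => (Real.exp (-x)
      * (∫ ω, Real.exp (-(x / N₀) * I ω))
      - Real.exp (-x) * (((1 + w * x / ((m : ℝ) * N₀)) ^ m)⁻¹
        * ∫ ω, Real.exp (-(x / N₀) * I ω))) * x⁻¹ := by
    refine (ae_restrict_iff' measurableSet_Ioi).2 (ae_of_all _ fun x hx => ?_)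
    have hx0 : (0 : ℝ) < x := hx
    have hc1 : ((1 + w * x / ((m : ℝ) * N₀)) ^ m)⁻¹ ≤ 1 := by
      rw [inv_le_one₀ (by positivity)]
      apply one_le_pow₀
      nlinarith [div_nonneg (mul_nonneg hw.le hx0.le) (mul_nonneg hm0.le hN.le)]
    have h2 : 0 ≤ Real.exp (-x) * (∫ ω, Real.exp (-(x / N₀) * I ω))
        - Real.exp (-x) * (((1 + w * x / ((m : ℝ) * N₀)) ^ m)⁻¹
          * ∫ ω, Real.exp (-(x / N₀) * I ω)) := by
      nlinarith [mul_nonneg (mul_nonneg (Real.exp_pos (-x)).le (hLIr_nonneg x))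
        (sub_nonneg.2 hc1)]
    exact mul_nonneg h2 (inv_nonneg.2 hx0.le)
  -- put everything together
  have hpos : 0 ≤ᵐ[(volume : Measure Ω)] fun ω => Real.log (1 + W ω / (I ω + N₀)) := by
    filter_upwards [hW0] with ω hω
    have h1 : 0 ≤ W ω / (I ω + N₀) := div_nonneg hω (hIb ω).le
    exact Real.log_nonneg (by linarith)
  have hmeas_log : AEStronglyMeasurable (fun ω => Real.log (1 + W ω / (I ω + N₀)))
      (volume : Measure Ω) :=
    (Real.measurable_log.comp (measurable_const.add (hWm.div (hIm.add_const N₀)))).aestronglyMeasurable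
  rw [integral_eq_lintegral_of_nonneg_ae hpos hmeas_log, hmain,
    ← integral_eq_lintegral_of_nonneg_ae hf0 hf_meas.aestronglyMeasurable.restrict,
    ← MeasureTheory.integral_const_mul]
  apply setIntegral_congr_fun measurableSet_Ioi
  intro x hx
  have hx0 : (0 : ℝ) < x := hx
  have hu : (1 + w * x / ((m : ℝ) * N₀)) ^ m ≠ 0 := by positivity
  field_simp
end

section
/- For every natural number m ≥ 1 and every real z > 0, (1/(m−1)!) · dᵐ/dzᵐ ( z^{m−1} · log(1+z) ) = (1/z) · ( 1 − (1+z)^{−m} ). -/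
open Set Filter Topology

/-- On an open set, `iteratedDerivWithin` coincides with `iteratedDeriv`. -/
lemma iterDerivWithin_eq_of_isOpen {f : ℝ → ℝ} {s : Set ℝ} (hs : IsOpen s) {x : ℝ}
    (hx : x ∈ s) (n : ℕ) : iteratedDerivWithin n f s x = iteratedDeriv n f x := by
  simp only [iteratedDerivWithin, iteratedDeriv, iteratedFDerivWithin_of_isOpen n hs hx]

/-- Iterated derivatives of a smooth-on-open-set function are differentiable there. -/
lemma diffAt_iteratedDeriv {f : ℝ → ℝ} {s : Set ℝ} (hs : IsOpen s)
    (hf : ContDiffOn ℝ ⊤ f s) (n : ℕ) {x : ℝ} (hx : x ∈ s) :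
    DifferentiableAt ℝ (iteratedDeriv n f) x := by
  have hu : UniqueDiffOn ℝ s := hs.uniqueDiffOn
  have h1 : DifferentiableWithinAt ℝ (iteratedDerivWithin n f s) s x :=
    hf.differentiableOn_iteratedDerivWithin (by exact_mod_cast WithTop.coe_lt_top (n : ℕ∞)) hu x hx
  have h2 : DifferentiableAt ℝ (iteratedDerivWithin n f s) x :=
    h1.differentiableAt (hs.mem_nhds hx)
  refine h2.congr_of_eventuallyEq ?_
  filter_upwards [hs.mem_nhds hx] with y hy using (iterDerivWithin_eq_of_isOpen hs hy n).symm

/-- Two-term Leibniz rule for multiplication by the identity, on an open set. -/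
lemma iteratedDeriv_id_mul {f : ℝ → ℝ} {s : Set ℝ} (hs : IsOpen s)
    (hd : ∀ n, ∀ x ∈ s, DifferentiableAt ℝ (iteratedDeriv n f) x) (n : ℕ) :
    ∀ x ∈ s, iteratedDeriv (n + 1) (fun z => z * f z) x =
      x * iteratedDeriv (n + 1) f x + ((n : ℝ) + 1) * iteratedDeriv n f x := by
  induction n with
  | zero =>
    intro x hx
    have hf0 : DifferentiableAt ℝ f x := by
      have := hd 0 x hx; rwa [iteratedDeriv_zero] at this
    rw [iteratedDeriv_one, deriv_fun_mul differentiableAt_fun_id hf0, deriv_id'',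
      iteratedDeriv_one, iteratedDeriv_zero]
    push_cast
    ring
  | succ n ih =>
    intro x hx
    have heq : iteratedDeriv (n + 1) (fun z => z * f z) =ᶠ[𝓝 x]
        fun y => y * iteratedDeriv (n + 1) f y + ((n : ℝ) + 1) * iteratedDeriv n f y := by
      filter_upwards [hs.mem_nhds hx] with y hy using ih y hy
    have h1 : DifferentiableAt ℝ (iteratedDeriv (n + 1) f) x := hd (n + 1) x hx
    have h2 : DifferentiableAt ℝ (iteratedDeriv n f) x := hd n x hx
    rw [iteratedDeriv_succ, heq.deriv_eq,
      deriv_fun_add (differentiableAt_fun_id.fun_mul h1) (h2.const_mul _),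
      deriv_fun_mul differentiableAt_fun_id h1, deriv_const_mul _ h2, deriv_id'',
      ← iteratedDeriv_succ, ← iteratedDeriv_succ]
    push_cast
    ring

lemma smooth_aux (k : ℕ) :
    ContDiffOn ℝ ⊤ (fun z : ℝ => z ^ k * Real.log (1 + z)) (Set.Ioi (0 : ℝ)) := by
  refine ContDiffOn.mul (ContDiff.contDiffOn (by fun_prop)) ?_
  refine ContDiffOn.log (contDiffOn_const.add contDiffOn_id) ?_
  intro x hx
  have : (0 : ℝ) < x := hx
  positivity

lemma key_formula (k : ℕ) : ∀ x ∈ Set.Ioi (0 : ℝ),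
    iteratedDeriv (k + 1) (fun z : ℝ => z ^ k * Real.log (1 + z)) x =
      (k.factorial : ℝ) * (1 - ((1 + x) ^ (k + 1))⁻¹) * x⁻¹ := by
  induction k with
  | zero =>
    intro x hx
    have hx0 : (0 : ℝ) < x := hx
    have h1x : (1 : ℝ) + x ≠ 0 := by positivity
    have hlog : HasDerivAt (fun z : ℝ => z ^ 0 * Real.log (1 + z)) (1 / (1 + x)) x := by
      have h : HasDerivAt (fun z : ℝ => 1 + z) 1 x := (hasDerivAt_id x).const_add 1
      have := (h.log h1x)
      simpa using this.congr_deriv (by ring)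
    rw [iteratedDeriv_one, hlog.deriv]
    field_simp
    simp only [zero_add, pow_one, Nat.factorial_zero, Nat.cast_one]
    ring
  | succ k ih =>
    intro x hx
    have hx0 : (0 : ℝ) < x := hx
    have h1x : (0 : ℝ) < 1 + x := by positivity
    have h1xne : (1 : ℝ) + x ≠ 0 := ne_of_gt h1x
    -- rewrite the function using a factor of z
    have hfun : (fun z : ℝ => z ^ (k + 1) * Real.log (1 + z)) =
        fun z : ℝ => z * (z ^ k * Real.log (1 + z)) := by
      funext z; ring
    rw [hfun]
    -- Leibniz
    have hd : ∀ n, ∀ y ∈ Set.Ioi (0 : ℝ),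
        DifferentiableAt ℝ (iteratedDeriv n (fun z : ℝ => z ^ k * Real.log (1 + z))) y :=
      fun n y hy => diffAt_iteratedDeriv isOpen_Ioi (smooth_aux k) n hy
    rw [iteratedDeriv_id_mul isOpen_Ioi hd (k + 1) x hx]
    -- the (k+1)-st derivative is given by the IH
    rw [ih x hx]
    -- compute the (k+2)-nd derivative as deriv of the IH closed form
    have heq : iteratedDeriv (k + 1) (fun z : ℝ => z ^ k * Real.log (1 + z)) =ᶠ[𝓝 x]
        fun y => (k.factorial : ℝ) * (1 - ((1 + y) ^ (k + 1))⁻¹) * y⁻¹ := by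
      filter_upwards [isOpen_Ioi.mem_nhds hx] with y hy using ih y hy
    -- derivative of the closed form
    have hpow : HasDerivAt (fun y : ℝ => (1 + y) ^ (k + 1))
        (((k : ℝ) + 1) * (1 + x) ^ k) x := by
      have h : HasDerivAt (fun y : ℝ => 1 + y) 1 x := (hasDerivAt_id x).const_add 1
      have := h.fun_pow (k + 1)
      simpa using this
    have hinv : HasDerivAt (fun y : ℝ => ((1 + y) ^ (k + 1))⁻¹)
        (-(((k : ℝ) + 1) * (1 + x) ^ k) / ((1 + x) ^ (k + 1)) ^ 2) x :=
      hpow.inv (pow_ne_zero _ h1xne)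
    have hsub : HasDerivAt (fun y : ℝ => 1 - ((1 + y) ^ (k + 1))⁻¹)
        (((k : ℝ) + 1) * (1 + x) ^ k / ((1 + x) ^ (k + 1)) ^ 2) x := by
      have := hinv.const_sub 1
      simpa [neg_div] using this
    have hxinv : HasDerivAt (fun y : ℝ => y⁻¹) (-(x ^ 2)⁻¹) x :=
      hasDerivAt_inv (ne_of_gt hx0)
    have hG : HasDerivAt (fun y => (k.factorial : ℝ) * (1 - ((1 + y) ^ (k + 1))⁻¹) * y⁻¹)
        ((k.factorial : ℝ) * (((k : ℝ) + 1) * (1 + x) ^ k / ((1 + x) ^ (k + 1)) ^ 2) * x⁻¹ +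
          (k.factorial : ℝ) * (1 - ((1 + x) ^ (k + 1))⁻¹) * (-(x ^ 2)⁻¹)) x :=
      ((hsub.const_mul (k.factorial : ℝ)).mul hxinv)
    rw [iteratedDeriv_succ, heq.deriv_eq, hG.deriv]
    -- algebra
    have hkf : (k.factorial : ℝ) ≠ 0 := Nat.cast_ne_zero.mpr k.factorial_ne_zero
    have hxne : x ≠ 0 := ne_of_gt hx0
    rw [Nat.factorial_succ]
    push_cast
    field_simp
    ring

/-- Closed form for the derivative term in the rate formulas of Theorem 3:
(1/(m−1)!) dᵐ/dzᵐ ( z^{m−1} log(1+z) ) = (1/z)(1 − (1+z)^{−m}). -/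
theorem iteratedDeriv_log_term (m : ℕ) (hm : 1 ≤ m) (z : ℝ) (hz : 0 < z) :
    (1 / (m - 1).factorial : ℝ) *
      iteratedDeriv m (fun z : ℝ => z ^ (m - 1) * Real.log (1 + z)) z =
    (1 / z) * (1 - ((1 + z) ^ m)⁻¹) := by
  obtain ⟨k, rfl⟩ : ∃ k, m = k + 1 := ⟨m - 1, (Nat.succ_pred_eq_of_pos hm).symm⟩
  simp only [Nat.add_sub_cancel]
  rw [key_formula k z hz]
  have hkf : (k.factorial : ℝ) ≠ 0 := Nat.cast_ne_zero.mpr k.factorial_ne_zero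
  have hxne : z ≠ 0 := ne_of_gt hz
  have h1z : (1 : ℝ) + z ≠ 0 := by positivity
  have hp : ((1 : ℝ) + z) ^ (k + 1) ≠ 0 := pow_ne_zero _ h1z
  field_simp
end
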